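/- Let G be a (2,ℓ)-tight simple graph for ℓ ∈ {1,2}, let v be a degree-3 vertex with neighbours v₁, v₂, v₃ such that v₁v₂ ∉ E(G) but v₁v₃, v₂v₃ ∈ E(G). Then there is no (2,ℓ)-tight subgraph Y of G containing v₁ and v₂ but neither v nor v₃; consequently the graph obtained by deleting v and its incident edges and adding the edge v₁v₂ is (2,ℓ)-tight. -/

import Mathlib

open SimpleGraph

def Sparse (ℓ : ℕ) {V : Type*} (G : SimpleGraph V) : Prop :=
  ∀ H : G.Subgraph, H.edgeSet.Nonempty → H.edgeSet.ncard + ℓ ≤ 2 * H.verts.ncard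

def Tight (ℓ : ℕ) {V : Type*} (G : SimpleGraph V) : Prop :=
  Sparse ℓ G ∧ G.edgeSet.ncard + ℓ = 2 * Nat.card V

/-- A subgraph `Y` of `G` is `(2,ℓ)`-tight. -/
def TightSub (ℓ : ℕ) {V : Type*} {G : SimpleGraph V} (Y : G.Subgraph) : Prop :=
  Y.edgeSet.ncard + ℓ = 2 * Y.verts.ncard ∧
  ∀ Z : G.Subgraph, Z ≤ Y → Z.edgeSet.Nonempty → Z.edgeSet.ncard + ℓ ≤ 2 * Z.verts.ncard

lemma mem_map_sym2 {α β : Type*} (f : α → β) (S : Set (Sym2 α)) (a b : β) :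
    s(a, b) ∈ Sym2.map f '' S ↔ ∃ x y, s(x, y) ∈ S ∧ f x = a ∧ f y = b := by
  constructor
  · rintro ⟨e, he, hmap⟩
    induction e using Sym2.ind with
    | _ x y =>
      rw [Sym2.map_pair_eq, Sym2.eq_iff] at hmap
      rcases hmap with ⟨h1, h2⟩ | ⟨h1, h2⟩
      · exact ⟨x, y, he, h1, h2⟩
      · exact ⟨y, x, Sym2.eq_swap ▸ he, h2, h1⟩
  · rintro ⟨x, y, hS, rfl, rfl⟩
    exact ⟨s(x, y), hS, Sym2.map_pair_eq f x y⟩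

lemma mem_image_edgeSet_subgraph {V : Type*} {s : Set V} {G' : SimpleGraph s}
    (H : G'.Subgraph) (a b : V) :
    s(a, b) ∈ Sym2.map (Subtype.val) '' H.edgeSet ↔
      ∃ (ha : a ∈ s) (hb : b ∈ s), H.Adj ⟨a, ha⟩ ⟨b, hb⟩ := by
  rw [mem_map_sym2]
  constructor
  · rintro ⟨x, y, he, rfl, rfl⟩
    exact ⟨x.2, y.2, by simpa using Subgraph.mem_edgeSet.mp he⟩
  · rintro ⟨ha, hb, h⟩
    exact ⟨⟨a, ha⟩, ⟨b, hb⟩, Subgraph.mem_edgeSet.mpr h, rfl, rfl⟩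

lemma mem_image_edgeSet_graph {V : Type*} {s : Set V} (G' : SimpleGraph s) (a b : V) :
    s(a, b) ∈ Sym2.map (Subtype.val) '' G'.edgeSet ↔
      ∃ (ha : a ∈ s) (hb : b ∈ s), G'.Adj ⟨a, ha⟩ ⟨b, hb⟩ := by
  rw [mem_map_sym2]
  constructor
  · rintro ⟨x, y, he, rfl, rfl⟩
    exact ⟨x.2, y.2, by simpa using (SimpleGraph.mem_edgeSet _).mp he⟩
  · rintro ⟨ha, hb, h⟩
    exact ⟨⟨a, ha⟩, ⟨b, hb⟩, (SimpleGraph.mem_edgeSet _).mpr h, rfl, rfl⟩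

set_option maxHeartbeats 1000000 in
theorem stmt12 {V : Type*} [Finite V] (G : SimpleGraph V)
    (ℓ : ℕ) (hℓ : ℓ = 1 ∨ ℓ = 2) (hG : Tight ℓ G)
    (v v₁ v₂ v₃ : V)
    (hnb : G.neighborSet v = {v₁, v₂, v₃})
    (hdeg : (G.neighborSet v).ncard = 3)
    (h12 : ¬ G.Adj v₁ v₂) (h13 : G.Adj v₁ v₃) (h23 : G.Adj v₂ v₃) :
    (¬ ∃ Y : G.Subgraph, TightSub ℓ Y ∧ v₁ ∈ Y.verts ∧ v₂ ∈ Y.verts ∧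
        v ∉ Y.verts ∧ v₃ ∉ Y.verts) ∧
    Tight ℓ (SimpleGraph.induce {x : V | x ≠ v}
      (G ⊔ SimpleGraph.fromEdgeSet {s(v₁, v₂)})) := by
  -- basic adjacency facts
  have ha1 : G.Adj v v₁ := by
    have : v₁ ∈ G.neighborSet v := by rw [hnb]; simp
    exact this
  have ha2 : G.Adj v v₂ := by
    have : v₂ ∈ G.neighborSet v := by rw [hnb]; simp
    exact this
  have ha3 : G.Adj v v₃ := by
    have : v₃ ∈ G.neighborSet v := by rw [hnb]; simp
    exact this
  have hv1 : v₁ ≠ v := ha1.ne'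
  have hv2 : v₂ ≠ v := ha2.ne'
  have hv3 : v₃ ≠ v := ha3.ne'
  have hv1' : v ≠ v₁ := ha1.ne
  have hv2' : v ≠ v₂ := ha2.ne
  have hv3' : v ≠ v₃ := ha3.ne
  have h3 : ({v₁, v₂, v₃} : Set V).ncard = 3 := by rw [← hnb]; exact hdeg
  have hpair : ∀ a b : V, ({a, b} : Set V).ncard ≤ 2 := fun a b =>
    le_trans (Set.ncard_insert_le a {b}) (by simp)
  have hne12 : v₁ ≠ v₂ := by
    rintro rfl
    rw [show ({v₁, v₁, v₃} : Set V) = {v₁, v₃} by ext x; simp] at h3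
    have := hpair v₁ v₃; omega
  have hne13 : v₁ ≠ v₃ := by
    rintro rfl
    rw [show ({v₁, v₂, v₁} : Set V) = {v₁, v₂} by ext x; simp; tauto] at h3
    have := hpair v₁ v₂; omega
  have hne23 : v₂ ≠ v₃ := by
    rintro rfl
    rw [show ({v₁, v₂, v₂} : Set V) = {v₁, v₂} by ext x; simp] at h3
    have := hpair v₁ v₂; omega
  have hne21 : v₂ ≠ v₁ := hne12.symm
  have hne31 : v₃ ≠ v₁ := hne13.symm
  have hne32 : v₃ ≠ v₂ := hne23.symm
  -- cardinalities of the explicit edge sets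
  have hT3 : ({s(v, v₁), s(v, v₂), s(v, v₃)} : Set (Sym2 V)).ncard = 3 := by
    rw [Set.ncard_insert_of_notMem
        (by simp [Sym2.eq_iff, hv1, hv1', hv2, hv2', hv3, hv3', hne12, hne21, hne13, hne31,
          hne23, hne32]),
      Set.ncard_insert_of_notMem
        (by simp [Sym2.eq_iff, hv1, hv1', hv2, hv2', hv3, hv3', hne12, hne21, hne13, hne31,
          hne23, hne32]),
      Set.ncard_singleton]
  have hN5 : ({s(v, v₁), s(v, v₂), s(v, v₃), s(v₁, v₃), s(v₂, v₃)} : Set (Sym2 V)).ncard = 5 := by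
    rw [Set.ncard_insert_of_notMem
        (by simp [Sym2.eq_iff, hv1, hv1', hv2, hv2', hv3, hv3', hne12, hne21, hne13, hne31,
          hne23, hne32]),
      Set.ncard_insert_of_notMem
        (by simp [Sym2.eq_iff, hv1, hv1', hv2, hv2', hv3, hv3', hne12, hne21, hne13, hne31,
          hne23, hne32]),
      Set.ncard_insert_of_notMem
        (by simp [Sym2.eq_iff, hv1, hv1', hv2, hv2', hv3, hv3', hne12, hne21, hne13, hne31,
          hne23, hne32]),
      Set.ncard_insert_of_notMem
        (by simp [Sym2.eq_iff, hv1, hv1', hv2, hv2', hv3, hv3', hne12, hne21, hne13, hne31,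
          hne23, hne32]),
      Set.ncard_singleton]
  constructor
  · -- Part 1 : no tight subgraph Y
    rintro ⟨Y, ⟨hYt, _hYs⟩, hv1Y, hv2Y, hvY, hv3Y⟩
    let Y' : G.Subgraph :=
      { verts := Y.verts ∪ {v, v₃}
        Adj := fun a b => Y.Adj a b ∨
          ((a = v ∧ (b = v₁ ∨ b = v₂ ∨ b = v₃)) ∨ (a = v₃ ∧ (b = v₁ ∨ b = v₂))) ∨
          ((b = v ∧ (a = v₁ ∨ a = v₂ ∨ a = v₃)) ∨ (b = v₃ ∧ (a = v₁ ∨ a = v₂)))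
        adj_sub := by
          rintro a b (h | (⟨rfl, rfl | rfl | rfl⟩ | ⟨rfl, rfl | rfl⟩) |
            (⟨rfl, rfl | rfl | rfl⟩ | ⟨rfl, rfl | rfl⟩))
          · exact Y.adj_sub h
          · exact ha1
          · exact ha2
          · exact ha3
          · exact h13.symm
          · exact h23.symm
          · exact ha1.symm
          · exact ha2.symm
          · exact ha3.symm
          · exact h13
          · exact h23
        edge_vert := by
          rintro a b (h | (⟨rfl, _⟩ | ⟨rfl, _⟩) | (⟨rfl, rfl | rfl | rfl⟩ | ⟨rfl, rfl | rfl⟩))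
          · exact Or.inl (Y.edge_vert h)
          · exact Or.inr (by simp)
          · exact Or.inr (by simp)
          · exact Or.inl hv1Y
          · exact Or.inl hv2Y
          · exact Or.inr (by simp)
          · exact Or.inl hv1Y
          · exact Or.inl hv2Y
        symm.symm := by
          rintro a b (h | h | h)
          · exact Or.inl (Y.adj_symm h)
          · exact Or.inr (Or.inr h)
          · exact Or.inr (Or.inl h) }
    have hAdj : ∀ a b, Y'.Adj a b ↔ (Y.Adj a b ∨
          ((a = v ∧ (b = v₁ ∨ b = v₂ ∨ b = v₃)) ∨ (a = v₃ ∧ (b = v₁ ∨ b = v₂))) ∨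
          ((b = v ∧ (a = v₁ ∨ a = v₂ ∨ a = v₃)) ∨ (b = v₃ ∧ (a = v₁ ∨ a = v₂)))) :=
      fun _ _ => Iff.rfl
    have hE' : Y'.edgeSet =
        Y.edgeSet ∪ {s(v, v₁), s(v, v₂), s(v, v₃), s(v₁, v₃), s(v₂, v₃)} := by
      ext e
      induction e using Sym2.ind with
      | _ a b =>
        simp only [Subgraph.mem_edgeSet, hAdj, Set.mem_union, Set.mem_insert_iff,
          Set.mem_singleton_iff, Sym2.eq_iff]
        constructor
        · rintro (h | (⟨rfl, rfl | rfl | rfl⟩ | ⟨rfl, rfl | rfl⟩) |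
            (⟨rfl, rfl | rfl | rfl⟩ | ⟨rfl, rfl | rfl⟩))
          · exact Or.inl h
          all_goals simp
        · rintro (h | ((⟨rfl, rfl⟩ | ⟨rfl, rfl⟩) | (⟨rfl, rfl⟩ | ⟨rfl, rfl⟩) |
            (⟨rfl, rfl⟩ | ⟨rfl, rfl⟩) | (⟨rfl, rfl⟩ | ⟨rfl, rfl⟩) | (⟨rfl, rfl⟩ | ⟨rfl, rfl⟩)))
          · exact Or.inl h
          all_goals simp
    have hdisjE : Disjoint Y.edgeSet
        ({s(v, v₁), s(v, v₂), s(v, v₃), s(v₁, v₃), s(v₂, v₃)} : Set (Sym2 V)) := by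
      rw [Set.disjoint_right]
      intro e he
      simp only [Set.mem_insert_iff, Set.mem_singleton_iff] at he
      rcases he with rfl | rfl | rfl | rfl | rfl <;> intro hmem <;>
        rw [Subgraph.mem_edgeSet] at hmem
      · exact hvY (Y.edge_vert hmem)
      · exact hvY (Y.edge_vert hmem)
      · exact hvY (Y.edge_vert hmem)
      · exact hv3Y (Y.edge_vert hmem.symm)
      · exact hv3Y (Y.edge_vert hmem.symm)
    have hEcard : Y'.edgeSet.ncard = Y.edgeSet.ncard + 5 := by
      rw [hE', Set.ncard_union_eq hdisjE, hN5]
    have hdisjV : Disjoint Y.verts ({v, v₃} : Set V) := by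
      rw [Set.disjoint_right]
      rintro x (rfl | rfl)
      · exact hvY
      · exact hv3Y
    have hVcard : Y'.verts.ncard = Y.verts.ncard + 2 := by
      have h2 : ({v, v₃} : Set V).ncard = 2 := by
        rw [Set.ncard_insert_of_notMem (by simp [hv3']), Set.ncard_singleton]
      show (Y.verts ∪ {v, v₃}).ncard = _
      rw [Set.ncard_union_eq hdisjV, h2]
    have hnonempty : Y'.edgeSet.Nonempty := by
      refine ⟨s(v, v₁), ?_⟩
      rw [hE']
      simp
    have hsp := hG.1 Y' hnonempty
    rw [hEcard, hVcard] at hsp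
    omega
  · -- Part 2 : the modified graph is tight
    set Gp : SimpleGraph V := G ⊔ SimpleGraph.fromEdgeSet {s(v₁, v₂)} with hGp
    have hGpadj : ∀ a b : V, Gp.Adj a b ↔
        (G.Adj a b ∨ (a = v₁ ∧ b = v₂) ∨ (a = v₂ ∧ b = v₁)) := by
      intro a b
      rw [hGp, sup_adj, fromEdgeSet_adj]
      simp only [Set.mem_singleton_iff, Sym2.eq_iff]
      constructor
      · rintro (h | ⟨(⟨h1, h2⟩ | ⟨h1, h2⟩), _⟩)
        · exact Or.inl h
        · exact Or.inr (Or.inl ⟨h1, h2⟩)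
        · exact Or.inr (Or.inr ⟨h1, h2⟩)
      · rintro (h | ⟨rfl, rfl⟩ | ⟨rfl, rfl⟩)
        · exact Or.inl h
        · exact Or.inr ⟨Or.inl ⟨rfl, rfl⟩, hne12⟩
        · exact Or.inr ⟨Or.inr ⟨rfl, rfl⟩, hne21⟩
    constructor
    · -- sparsity
      intro H hne
      -- image of H in V
      set imV : Set V := Subtype.val '' H.verts with himV
      set imE : Set (Sym2 V) := Sym2.map (Subtype.val) '' H.edgeSet with himE
      have hVcard : imV.ncard = H.verts.ncard :=
        Set.ncard_image_of_injective _ Subtype.val_injective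
      have hEcard : imE.ncard = H.edgeSet.ncard :=
        Set.ncard_image_of_injective _ (Sym2.map.injective Subtype.val_injective)
      have hvim : v ∉ imV := by
        rintro ⟨x, _, hx⟩
        exact x.2 hx
      have himE_mem : ∀ a b : V, s(a, b) ∈ imE ↔
          ∃ (ha : a ≠ v) (hb : b ≠ v), H.Adj ⟨a, ha⟩ ⟨b, hb⟩ := fun a b =>
        mem_image_edgeSet_subgraph H a b
      have hHadjGp : ∀ (a b : V) (ha : a ≠ v) (hb : b ≠ v),
          H.Adj ⟨a, ha⟩ ⟨b, hb⟩ → Gp.Adj a b := by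
        intro a b ha hb h
        exact H.adj_sub h
      by_cases hB : H.Adj ⟨v₁, hv1⟩ ⟨v₂, hv2⟩
      · -- the new edge is used by H
        have hv1im : v₁ ∈ imV := ⟨_, H.edge_vert hB, rfl⟩
        have hv2im : v₂ ∈ imV := ⟨_, H.edge_vert (H.adj_symm hB), rfl⟩
        have he12 : s(v₁, v₂) ∈ imE := (himE_mem v₁ v₂).mpr ⟨hv1, hv2, hB⟩
        have hEpos : 1 ≤ imE.ncard := (Set.ncard_pos).mpr ⟨_, he12⟩
        have hA0sub : ∀ a b : V, (∃ (ha : a ≠ v) (hb : b ≠ v), H.Adj ⟨a, ha⟩ ⟨b, hb⟩) →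
            s(a, b) ≠ s(v₁, v₂) → G.Adj a b := by
          rintro a b ⟨ha, hb, h⟩ hneq
          have := (hGpadj a b).mp (hHadjGp a b ha hb h)
          rcases this with h' | ⟨rfl, rfl⟩ | ⟨rfl, rfl⟩
          · exact h'
          · exact absurd (by rw [Sym2.eq_iff]; tauto) hneq
          · exact absurd (by rw [Sym2.eq_iff]; tauto) hneq
        by_cases hv3H : v₃ ∈ imV
        · -- v₃ belongs to H : add only v and three edges
          let K : G.Subgraph :=
            { verts := imV ∪ {v}
              Adj := fun a b =>
                ((∃ (ha : a ≠ v) (hb : b ≠ v), H.Adj ⟨a, ha⟩ ⟨b, hb⟩) ∧ s(a, b) ≠ s(v₁, v₂)) ∨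
                (a = v ∧ (b = v₁ ∨ b = v₂ ∨ b = v₃)) ∨
                (b = v ∧ (a = v₁ ∨ a = v₂ ∨ a = v₃))
              adj_sub := by
                rintro a b (⟨h, hneq⟩ | ⟨rfl, rfl | rfl | rfl⟩ | ⟨rfl, rfl | rfl | rfl⟩)
                · exact hA0sub a b h hneq
                · exact ha1
                · exact ha2
                · exact ha3
                · exact ha1.symm
                · exact ha2.symm
                · exact ha3.symm
              edge_vert := by
                rintro a b (⟨⟨ha, hb, h⟩, _⟩ | ⟨rfl, _⟩ | ⟨rfl, rfl | rfl | rfl⟩)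
                · exact Or.inl ⟨_, H.edge_vert h, rfl⟩
                · exact Or.inr rfl
                · exact Or.inl hv1im
                · exact Or.inl hv2im
                · exact Or.inl hv3H
              symm.symm := by
                intro a b h
                rcases h with ⟨⟨ha, hb, h⟩, hneq⟩ | h | h
                · exact Or.inl ⟨⟨hb, ha, H.adj_symm h⟩, by rwa [Sym2.eq_swap]⟩
                · exact Or.inr (Or.inr h)
                · exact Or.inr (Or.inl h) }
          have hAdjK : ∀ a b, K.Adj a b ↔
              (((∃ (ha : a ≠ v) (hb : b ≠ v), H.Adj ⟨a, ha⟩ ⟨b, hb⟩) ∧ s(a, b) ≠ s(v₁, v₂)) ∨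
                (a = v ∧ (b = v₁ ∨ b = v₂ ∨ b = v₃)) ∨
                (b = v ∧ (a = v₁ ∨ a = v₂ ∨ a = v₃))) := fun _ _ => Iff.rfl
          have hKE : K.edgeSet = (imE \ {s(v₁, v₂)}) ∪ {s(v, v₁), s(v, v₂), s(v, v₃)} := by
            ext e
            induction e using Sym2.ind with
            | _ a b =>
              simp only [Subgraph.mem_edgeSet, hAdjK, Set.mem_union, Set.mem_diff,
                Set.mem_insert_iff, Set.mem_singleton_iff, himE_mem]
              constructor
              · rintro (⟨h, hneq⟩ | ⟨rfl, rfl | rfl | rfl⟩ | ⟨rfl, rfl | rfl | rfl⟩)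
                · exact Or.inl ⟨h, hneq⟩
                · simp
                · simp
                · simp
                · simp [Sym2.eq_iff]
                · simp [Sym2.eq_iff]
                · simp [Sym2.eq_iff]
              · rintro (⟨h, hneq⟩ | h)
                · exact Or.inl ⟨h, hneq⟩
                · rw [Sym2.eq_iff, Sym2.eq_iff, Sym2.eq_iff] at h
                  rcases h with (⟨rfl, rfl⟩ | ⟨rfl, rfl⟩) | (⟨rfl, rfl⟩ | ⟨rfl, rfl⟩) |
                    (⟨rfl, rfl⟩ | ⟨rfl, rfl⟩)
                  all_goals simp
          have hdisjE : Disjoint (imE \ {s(v₁, v₂)})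
              ({s(v, v₁), s(v, v₂), s(v, v₃)} : Set (Sym2 V)) := by
            rw [Set.disjoint_right]
            intro e he
            simp only [Set.mem_insert_iff, Set.mem_singleton_iff] at he
            rcases he with rfl | rfl | rfl <;> rintro ⟨hmem, -⟩ <;>
              rw [himE_mem] at hmem <;> exact hmem.1 rfl
          have hKEcard : K.edgeSet.ncard = (imE.ncard - 1) + 3 := by
            rw [hKE, Set.ncard_union_eq hdisjE, hT3, Set.ncard_diff_singleton_of_mem he12]
          have hKVcard : K.verts.ncard = imV.ncard + 1 := by
            show (imV ∪ {v}).ncard = _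
            rw [Set.union_singleton, Set.ncard_insert_of_notMem hvim]
          have hKne : K.edgeSet.Nonempty := ⟨s(v, v₁), by rw [hKE]; simp⟩
          have hsp := hG.1 K hKne
          rw [hKEcard, hKVcard] at hsp
          rw [← hEcard, ← hVcard]
          omega
        · -- v₃ not in H : add v, v₃ and five edges
          let K : G.Subgraph :=
            { verts := imV ∪ {v, v₃}
              Adj := fun a b =>
                ((∃ (ha : a ≠ v) (hb : b ≠ v), H.Adj ⟨a, ha⟩ ⟨b, hb⟩) ∧ s(a, b) ≠ s(v₁, v₂)) ∨
                ((a = v ∧ (b = v₁ ∨ b = v₂ ∨ b = v₃)) ∨ (a = v₃ ∧ (b = v₁ ∨ b = v₂))) ∨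
                ((b = v ∧ (a = v₁ ∨ a = v₂ ∨ a = v₃)) ∨ (b = v₃ ∧ (a = v₁ ∨ a = v₂)))
              adj_sub := by
                rintro a b (⟨h, hneq⟩ | (⟨rfl, rfl | rfl | rfl⟩ | ⟨rfl, rfl | rfl⟩) |
                  (⟨rfl, rfl | rfl | rfl⟩ | ⟨rfl, rfl | rfl⟩))
                · exact hA0sub a b h hneq
                · exact ha1
                · exact ha2
                · exact ha3
                · exact h13.symm
                · exact h23.symm
                · exact ha1.symm
                · exact ha2.symm
                · exact ha3.symm
                · exact h13
                · exact h23
              edge_vert := by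
                rintro a b (⟨⟨ha, hb, h⟩, _⟩ | (⟨rfl, _⟩ | ⟨rfl, _⟩) |
                  (⟨rfl, rfl | rfl | rfl⟩ | ⟨rfl, rfl | rfl⟩))
                · exact Or.inl ⟨_, H.edge_vert h, rfl⟩
                · exact Or.inr (by simp)
                · exact Or.inr (by simp)
                · exact Or.inl hv1im
                · exact Or.inl hv2im
                · exact Or.inr (by simp)
                · exact Or.inl hv1im
                · exact Or.inl hv2im
              symm.symm := by
                intro a b h
                rcases h with ⟨⟨ha, hb, h⟩, hneq⟩ | h | h
                · exact Or.inl ⟨⟨hb, ha, H.adj_symm h⟩, by rwa [Sym2.eq_swap]⟩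
                · exact Or.inr (Or.inr h)
                · exact Or.inr (Or.inl h) }
          have hAdjK : ∀ a b, K.Adj a b ↔
              (((∃ (ha : a ≠ v) (hb : b ≠ v), H.Adj ⟨a, ha⟩ ⟨b, hb⟩) ∧ s(a, b) ≠ s(v₁, v₂)) ∨
                ((a = v ∧ (b = v₁ ∨ b = v₂ ∨ b = v₃)) ∨ (a = v₃ ∧ (b = v₁ ∨ b = v₂))) ∨
                ((b = v ∧ (a = v₁ ∨ a = v₂ ∨ a = v₃)) ∨ (b = v₃ ∧ (a = v₁ ∨ a = v₂)))) :=
            fun _ _ => Iff.rfl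
          have hKE : K.edgeSet = (imE \ {s(v₁, v₂)}) ∪
              {s(v, v₁), s(v, v₂), s(v, v₃), s(v₁, v₃), s(v₂, v₃)} := by
            ext e
            induction e using Sym2.ind with
            | _ a b =>
              simp only [Subgraph.mem_edgeSet, hAdjK, Set.mem_union, Set.mem_diff,
                Set.mem_insert_iff, Set.mem_singleton_iff, himE_mem]
              constructor
              · rintro (⟨h, hneq⟩ | (⟨rfl, rfl | rfl | rfl⟩ | ⟨rfl, rfl | rfl⟩) |
                  (⟨rfl, rfl | rfl | rfl⟩ | ⟨rfl, rfl | rfl⟩))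
                · exact Or.inl ⟨h, hneq⟩
                all_goals simp [Sym2.eq_iff]
              · rintro (⟨h, hneq⟩ | h)
                · exact Or.inl ⟨h, hneq⟩
                · rw [Sym2.eq_iff, Sym2.eq_iff, Sym2.eq_iff, Sym2.eq_iff, Sym2.eq_iff] at h
                  rcases h with (⟨rfl, rfl⟩ | ⟨rfl, rfl⟩) | (⟨rfl, rfl⟩ | ⟨rfl, rfl⟩) |
                    (⟨rfl, rfl⟩ | ⟨rfl, rfl⟩) | (⟨rfl, rfl⟩ | ⟨rfl, rfl⟩) |
                    (⟨rfl, rfl⟩ | ⟨rfl, rfl⟩)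
                  all_goals simp
          have hv3notim : ∀ (a : V) (ha : a ≠ v) (hb : v₃ ≠ v),
              ¬ H.Adj ⟨a, ha⟩ ⟨v₃, hb⟩ := by
            intro a ha hb h
            exact hv3H ⟨_, H.edge_vert (H.adj_symm h), rfl⟩
          have hdisjE : Disjoint (imE \ {s(v₁, v₂)})
              ({s(v, v₁), s(v, v₂), s(v, v₃), s(v₁, v₃), s(v₂, v₃)} : Set (Sym2 V)) := by
            rw [Set.disjoint_right]
            intro e he
            simp only [Set.mem_insert_iff, Set.mem_singleton_iff] at he
            rcases he with rfl | rfl | rfl | rfl | rfl <;> rintro ⟨hmem, -⟩ <;>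
              rw [himE_mem] at hmem
            · exact hmem.1 rfl
            · exact hmem.1 rfl
            · exact hmem.1 rfl
            · obtain ⟨ha, hb, h⟩ := hmem; exact hv3notim v₁ ha hb h
            · obtain ⟨ha, hb, h⟩ := hmem; exact hv3notim v₂ ha hb h
          have hKEcard : K.edgeSet.ncard = (imE.ncard - 1) + 5 := by
            rw [hKE, Set.ncard_union_eq hdisjE, hN5, Set.ncard_diff_singleton_of_mem he12]
          have hdisjV : Disjoint imV ({v, v₃} : Set V) := by
            rw [Set.disjoint_right]
            rintro x (rfl | rfl)
            · exact hvim
            · exact hv3H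
          have hKVcard : K.verts.ncard = imV.ncard + 2 := by
            have h2 : ({v, v₃} : Set V).ncard = 2 := by
              rw [Set.ncard_insert_of_notMem (by simp [hv3']), Set.ncard_singleton]
            show (imV ∪ {v, v₃}).ncard = _
            rw [Set.ncard_union_eq hdisjV, h2]
          have hKne : K.edgeSet.Nonempty := ⟨s(v, v₁), by rw [hKE]; simp⟩
          have hsp := hG.1 K hKne
          rw [hKEcard, hKVcard] at hsp
          rw [← hEcard, ← hVcard]
          omega
      · -- the new edge is not used by H : H maps to a subgraph of G
        have hadjG : ∀ (a b : V) (ha : a ≠ v) (hb : b ≠ v),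
            H.Adj ⟨a, ha⟩ ⟨b, hb⟩ → G.Adj a b := by
          intro a b ha hb h
          have := (hGpadj a b).mp (hHadjGp a b ha hb h)
          rcases this with h' | ⟨rfl, rfl⟩ | ⟨rfl, rfl⟩
          · exact h'
          · exact absurd h hB
          · exact absurd (H.adj_symm h) hB
        let K : G.Subgraph :=
          { verts := imV
            Adj := fun a b => ∃ (ha : a ≠ v) (hb : b ≠ v), H.Adj ⟨a, ha⟩ ⟨b, hb⟩
            adj_sub := by
              rintro a b ⟨ha, hb, h⟩
              exact hadjG a b ha hb h
            edge_vert := by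
              rintro a b ⟨ha, hb, h⟩
              exact ⟨_, H.edge_vert h, rfl⟩
            symm.symm := by
              rintro a b ⟨ha, hb, h⟩
              exact ⟨hb, ha, H.adj_symm h⟩ }
        have hKE : K.edgeSet = imE := by
          ext e
          induction e using Sym2.ind with
          | _ a b =>
            rw [Subgraph.mem_edgeSet, himE_mem]
        have hKne : K.edgeSet.Nonempty := by
          rw [hKE]
          exact hne.image _
        have hsp := hG.1 K hKne
        have : K.verts.ncard = imV.ncard := rfl
        rw [hKE, this] at hsp
        rw [← hEcard, ← hVcard]
        omega
    · -- edge count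
      haveI : Nonempty V := ⟨v⟩
      have hNpos : 0 < Nat.card V := Nat.card_pos
      have hcardV : Nat.card {x : V | x ≠ v} = Nat.card V - 1 := by
        have hs : ({x : V | x ≠ v} : Set V) = ({v} : Set V)ᶜ := by ext x; simp
        rw [Nat.card_coe_set_eq, hs]
        have := Set.ncard_add_ncard_compl ({v} : Set V)
        rw [Set.ncard_singleton] at this
        omega
      set G' := SimpleGraph.induce {x : V | x ≠ v} Gp with hG'
      have hG'adj : ∀ (a b : V) (ha : a ≠ v) (hb : b ≠ v),
          G'.Adj ⟨a, ha⟩ ⟨b, hb⟩ ↔ Gp.Adj a b := by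
        intro a b ha hb
        exact Iff.rfl
      set imE : Set (Sym2 V) := Sym2.map (Subtype.val) '' G'.edgeSet with himE
      have hEcard : imE.ncard = G'.edgeSet.ncard :=
        Set.ncard_image_of_injective _ (Sym2.map.injective Subtype.val_injective)
      have hT3sub : ({s(v, v₁), s(v, v₂), s(v, v₃)} : Set (Sym2 V)) ⊆ G.edgeSet := by
        intro e he
        simp only [Set.mem_insert_iff, Set.mem_singleton_iff] at he
        rcases he with rfl | rfl | rfl
        · exact ha1
        · exact ha2
        · exact ha3
      have hT3le : 3 ≤ G.edgeSet.ncard := by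
        have := Set.ncard_le_ncard hT3sub (Set.toFinite _)
        omega
      have himEeq : imE = (G.edgeSet \ {s(v, v₁), s(v, v₂), s(v, v₃)}) ∪ {s(v₁, v₂)} := by
        ext e
        induction e using Sym2.ind with
        | _ a b =>
          rw [himE, mem_image_edgeSet_graph]
          simp only [Set.mem_union, Set.mem_diff, Set.mem_insert_iff, Set.mem_singleton_iff,
            SimpleGraph.mem_edgeSet]
          constructor
          · rintro ⟨ha, hb, h⟩
            rw [hG'adj, hGpadj] at h
            rcases h with h | ⟨rfl, rfl⟩ | ⟨rfl, rfl⟩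
            · refine Or.inl ⟨h, ?_⟩
              have ha' : a ≠ v := ha
              have hb' : b ≠ v := hb
              simp [Sym2.eq_iff, ha', hb']
            · exact Or.inr (by rw [Sym2.eq_iff]; tauto)
            · exact Or.inr (by rw [Sym2.eq_iff]; tauto)
          · rintro (⟨hadj, hnT⟩ | h)
            · have ha : a ≠ v := by
                rintro rfl
                have hbmem : b ∈ G.neighborSet a := hadj
                rw [hnb] at hbmem
                apply hnT
                rw [Sym2.eq_iff, Sym2.eq_iff, Sym2.eq_iff]
                simp only [Set.mem_insert_iff, Set.mem_singleton_iff] at hbmem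
                tauto
              have hb : b ≠ v := by
                rintro rfl
                have hamem : a ∈ G.neighborSet b := hadj.symm
                rw [hnb] at hamem
                apply hnT
                rw [Sym2.eq_iff, Sym2.eq_iff, Sym2.eq_iff]
                simp only [Set.mem_insert_iff, Set.mem_singleton_iff] at hamem
                tauto
              exact ⟨ha, hb, by rw [hG'adj, hGpadj]; exact Or.inl hadj⟩
            · rw [Sym2.eq_iff] at h
              rcases h with ⟨rfl, rfl⟩ | ⟨rfl, rfl⟩
              · exact ⟨hv1, hv2, by rw [hG'adj, hGpadj]; tauto⟩
              · exact ⟨hv2, hv1, by rw [hG'adj, hGpadj]; tauto⟩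
      have hdisj : s(v₁, v₂) ∉ G.edgeSet \ {s(v, v₁), s(v, v₂), s(v, v₃)} := by
        rintro ⟨hmem, -⟩
        exact h12 hmem
      have hdiffcard : (G.edgeSet \ {s(v, v₁), s(v, v₂), s(v, v₃)}).ncard =
          G.edgeSet.ncard - 3 := by
        rw [Set.ncard_diff hT3sub, hT3]
      have himEcard : imE.ncard = (G.edgeSet.ncard - 3) + 1 := by
        rw [himEeq, Set.union_singleton, Set.ncard_insert_of_notMem hdisj, hdiffcard]
      have hGcount := hG.2
      rw [hcardV, ← hEcard, himEcard]
      omega
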